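/- Let $k$ be a commutative ring and $I \subseteq k$ an ideal with $I^2 = 0$. Let $f : A \to B$ be a morphism of $k$-algebras such that $B$ is flat as a $k$-module and the induced map $A/IA \to B/IB$ is an isomorphism. Then $f$ is an isomorphism. -/

import Mathlib

open TensorProduct


/-- Let `k` be a commutative ring, `I` an ideal with `I ^ 2 = 0`, and `f : A → B` a morphism
of `k`-algebras with `B` flat over `k` such that the induced map `A⧸IA → B⧸IB` is an
isomorphism. Then `f` is an isomorphism. -/
theorem stmt3 (k : Type) [CommRing k] (I : Ideal k) (hI : I ^ 2 = ⊥)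
    (A B : Type) [CommRing A] [CommRing B] [Algebra k A] [Algebra k B]
    [Module.Flat k B] (f : A →ₐ[k] B)
    (hle : I.map (algebraMap k A) ≤ (I.map (algebraMap k B)).comap f.toRingHom)
    (hiso : Function.Bijective
      (Ideal.quotientMap (I.map (algebraMap k B)) f.toRingHom hle)) :
    Function.Bijective f := by
  set JA : Submodule k A := (I.map (algebraMap k A)).restrictScalars k with hJA
  set JB : Submodule k B := (I.map (algebraMap k B)).restrictScalars k with hJB
  have hle' : JA ≤ JB.comap f.toLinearMap := fun a ha => hle ha
  -- Surjectivity
  have hsurj : Function.Surjective f := by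
    have htop : (⊤ : Submodule k B) ≤ LinearMap.range f.toLinearMap ⊔ I • ⊤ := by
      intro b _
      obtain ⟨y, hy⟩ := hiso.2 (Ideal.Quotient.mk _ b)
      obtain ⟨a, rfl⟩ := Ideal.Quotient.mk_surjective y
      rw [Ideal.quotientMap_mk] at hy
      have hmem : f a - b ∈ I.map (algebraMap k B) := by
        rwa [← Ideal.Quotient.mk_eq_mk_iff_sub_mem]
      have hb : b = f a - (f a - b) := by ring
      rw [hb]
      exact Submodule.sub_mem _ (Submodule.mem_sup_left ⟨a, rfl⟩)
        (Submodule.mem_sup_right (by rw [Ideal.smul_top_eq_map]; exact hmem))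
    have heq : (⊤ : Submodule k B) = LinearMap.range f.toLinearMap ⊔ I • ⊤ :=
      le_antisymm htop le_top
    have h2 : I • (⊤ : Submodule k B) ≤ LinearMap.range f.toLinearMap := by
      calc I • (⊤ : Submodule k B)
          = I • (LinearMap.range f.toLinearMap ⊔ I • ⊤) := by rw [← heq]
        _ = I • LinearMap.range f.toLinearMap ⊔ I • (I • ⊤) := Submodule.smul_sup _ _ _
        _ = I • LinearMap.range f.toLinearMap ⊔ (I • I) • ⊤ := by
              rw [Submodule.smul_assoc]
        _ = I • LinearMap.range f.toLinearMap ⊔ (⊥ : Ideal k) • ⊤ := by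
              rw [Ideal.smul_eq_mul, ← pow_two, hI]
        _ = I • LinearMap.range f.toLinearMap := by rw [Submodule.bot_smul, sup_bot_eq]
        _ ≤ LinearMap.range f.toLinearMap := Submodule.smul_le_right
    intro b
    have : b ∈ LinearMap.range f.toLinearMap := by
      have : b ∈ LinearMap.range f.toLinearMap ⊔ I • ⊤ := heq ▸ Submodule.mem_top
      rcases Submodule.mem_sup.mp this with ⟨x, hx, y, hy, rfl⟩
      exact Submodule.add_mem _ hx (h2 hy)
    exact this
  refine ⟨?_, hsurj⟩
  -- Injectivity
  -- multiplication maps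
  set μA : (↥I) ⊗[k] A →ₗ[k] A :=
    TensorProduct.lift ((LinearMap.lsmul k A).comp I.subtype) with hμAdef
  set μB : (↥I) ⊗[k] B →ₗ[k] B :=
    TensorProduct.lift ((LinearMap.lsmul k B).comp I.subtype) with hμBdef
  have hμB : Function.Injective μB := by
    have h1 : Function.Injective (LinearMap.rTensor B I.subtype) :=
      Module.Flat.rTensor_preserves_injective_linearMap _ I.injective_subtype
    have heq : μB = (TensorProduct.lid k B).toLinearMap ∘ₗ LinearMap.rTensor B I.subtype := by
      apply TensorProduct.ext'
      intro i b
      simp [hμBdef, TensorProduct.lid_tmul]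
    rw [heq]
    exact (TensorProduct.lid k B).injective.comp h1
  -- the induced map on quotients, as a linear map
  set g : (A ⧸ JA) →ₗ[k] (B ⧸ JB) := Submodule.mapQ JA JB f.toLinearMap hle' with hgdef
  have hg : Function.Bijective g := by
    constructor
    · rw [← LinearMap.ker_eq_bot, eq_bot_iff]
      intro x hx
      obtain ⟨a, rfl⟩ := JA.mkQ_surjective x
      rw [LinearMap.mem_ker, Submodule.mkQ_apply, Submodule.mapQ_apply,
        Submodule.Quotient.mk_eq_zero] at hx
      have hfa : f a ∈ I.map (algebraMap k B) := hx
      have h0 : Ideal.quotientMap (I.map (algebraMap k B)) f.toRingHom hle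
          (Ideal.Quotient.mk _ a) = 0 := by
        rw [Ideal.quotientMap_mk, Ideal.Quotient.eq_zero_iff_mem]
        exact hfa
      have : Ideal.Quotient.mk (I.map (algebraMap k A)) a = 0 := by
        apply hiso.1
        rw [h0, map_zero]
      have ha : a ∈ I.map (algebraMap k A) := Ideal.Quotient.eq_zero_iff_mem.mp this
      simpa [Submodule.Quotient.mk_eq_zero] using (show a ∈ JA from ha)
    · intro y
      obtain ⟨b, rfl⟩ := JB.mkQ_surjective y
      obtain ⟨z, hz⟩ := hiso.2 (Ideal.Quotient.mk _ b)
      obtain ⟨a, rfl⟩ := Ideal.Quotient.mk_surjective z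
      rw [Ideal.quotientMap_mk] at hz
      refine ⟨JA.mkQ a, ?_⟩
      rw [Submodule.mkQ_apply, Submodule.mapQ_apply, Submodule.mkQ_apply,
        Submodule.Quotient.eq]
      exact (Ideal.Quotient.mk_eq_mk_iff_sub_mem _ _).mp hz
  have hgT : Function.Injective (LinearMap.lTensor (↥I) g) := by
    exact (LinearEquiv.lTensor (↥I) (LinearEquiv.ofBijective g hg)).injective
  -- exactness
  have hex : Function.Exact (LinearMap.lTensor (↥I) JA.subtype)
      (LinearMap.lTensor (↥I) JA.mkQ) :=
    lTensor_exact (↥I) (LinearMap.exact_subtype_mkQ JA) (JA.mkQ_surjective)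
  -- μA kills the image of I ⊗ JA
  have hz : μA ∘ₗ (LinearMap.lTensor (↥I) JA.subtype) = 0 := by
    apply TensorProduct.ext'
    intro i a
    have hmem : algebraMap k A (i : k) * (a : A) ∈
        I.map (algebraMap k A) * I.map (algebraMap k A) :=
      Ideal.mul_mem_mul (Ideal.mem_map_of_mem _ i.2) a.2
    rw [← pow_two, ← Ideal.map_pow, hI, Ideal.map_bot, Ideal.mem_bot] at hmem
    simp only [LinearMap.comp_apply, LinearMap.lTensor_tmul, hμAdef, TensorProduct.lift.tmul,
      LinearMap.coe_comp, Function.comp_apply, Submodule.coe_subtype, LinearMap.lsmul_apply,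
      LinearMap.zero_apply]
    rw [Algebra.smul_def, hmem]
  -- commutation lemmas
  have hcomm1 : μB ∘ₗ LinearMap.lTensor (↥I) f.toLinearMap = f.toLinearMap ∘ₗ μA := by
    apply TensorProduct.ext'
    intro i a
    simp [hμAdef, hμBdef]
  have hcomm2 : LinearMap.lTensor (↥I) JB.mkQ ∘ₗ LinearMap.lTensor (↥I) f.toLinearMap
      = LinearMap.lTensor (↥I) g ∘ₗ LinearMap.lTensor (↥I) JA.mkQ := by
    rw [← LinearMap.lTensor_comp, ← LinearMap.lTensor_comp, hgdef, Submodule.mapQ_mkQ]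
  -- main argument
  rw [injective_iff_map_eq_zero]
  intro a hfa
  -- a ∈ JA
  have h0 : Ideal.Quotient.mk (I.map (algebraMap k A)) a = 0 := by
    apply hiso.1
    rw [map_zero, Ideal.quotientMap_mk, show f.toRingHom a = 0 from hfa, map_zero]
  have ha : a ∈ I.map (algebraMap k A) := Ideal.Quotient.eq_zero_iff_mem.mp h0
  -- lift a to I ⊗ A
  have hrange : I • (⊤ : Submodule k A) ≤ LinearMap.range μA := by
    rw [Submodule.smul_le]
    intro r hr n _
    exact ⟨(⟨r, hr⟩ : ↥I) ⊗ₜ n, by simp [hμAdef]⟩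
  obtain ⟨x, hx⟩ : ∃ x, μA x = a := by
    have : a ∈ LinearMap.range μA := hrange (by rw [Ideal.smul_top_eq_map]; exact ha)
    exact this
  -- f (μA x) = 0, so lTensor f x = 0 by flatness
  have h1 : LinearMap.lTensor (↥I) f.toLinearMap x = 0 := by
    apply hμB
    rw [map_zero]
    have := congrArg (fun φ => φ x) hcomm1
    simp only [LinearMap.comp_apply] at this
    rw [this, hx]
    exact hfa
  -- hence the image of x in I ⊗ (A/JA) is zero
  have h2 : LinearMap.lTensor (↥I) JA.mkQ x = 0 := by
    apply hgT
    rw [map_zero]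
    have := congrArg (fun φ => φ x) hcomm2
    simp only [LinearMap.comp_apply] at this
    rw [← this, h1, map_zero]
  -- so x comes from I ⊗ JA, and μA x = 0
  obtain ⟨y, hy⟩ := (hex x).mp h2
  have : μA x = 0 := by
    rw [← hy]
    have := congrArg (fun φ => φ y) hz
    simpa using this
  rw [hx] at this
  exact this
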